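/- arXiv:1304.0048 — 2 statements merged into one kernel-verified Lean document; each statement's English description precedes it below -/
import Mathlib

section
/- Let m ≥ 2 be an integer. There exists a constant C > 0 such that for every real a ≥ 0 and every complex z with |z| ≥ 1 and a ≤ |z|, one has |z|^{1−m} Σ_{l=1}^{∞} l^{m−1}/(1 + |l − a|)^{m+1} ≤ C. -/
open Complex Real

lemma gsum : Summable (fun j : ℤ => 2 / ((j:ℝ)^2 + 1)) := by
  have hbase : Summable (fun n : ℕ => 1 / ((n:ℝ)+1)^2) := by
    have h := Real.summable_one_div_nat_pow.mpr (le_refl 2)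
    have h2 := (summable_nat_add_iff 1).mpr h
    refine h2.congr fun n => ?_
    push_cast
    ring
  have hnat : Summable (fun n : ℕ => 2 / ((n:ℝ)^2 + 1)) := by
    rw [← summable_nat_add_iff 1]
    refine Summable.of_nonneg_of_le (fun n => by positivity) (fun n => ?_) (hbase.mul_left 2)
    have : (2:ℝ) * (1 / ((n:ℝ)+1)^2) = 2 / ((n:ℝ)+1)^2 := by ring
    rw [this]
    apply div_le_div_of_nonneg_left _ (by positivity) (by push_cast; nlinarith [sq_nonneg ((n:ℝ)+1)])
    norm_num
  exact hnat.of_nat_of_neg (hnat.congr fun n => by push_cast; ring)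


/-- Uniform summability estimate: for `m ≥ 2` there is `C > 0` such that for all
`a ≥ 0` and all `z ∈ ℂ` with `|z| ≥ 1` and `a ≤ |z|`,
`|z|^{1-m} Σ_{l=1}^∞ l^{m-1}/(1 + |l - a|)^{m+1} ≤ C`. -/
theorem stmt5 (m : ℕ) (hm : 2 ≤ m) :
    ∃ C : ℝ, 0 < C ∧ ∀ a : ℝ, 0 ≤ a → ∀ z : ℂ,
      1 ≤ ‖z‖ → a ≤ ‖z‖ →
      (∑' l : ℕ, ((l : ℝ) + 1) ^ (m - 1) / (1 + |((l : ℝ) + 1) - a|) ^ (m + 1))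
        / ‖z‖ ^ (m - 1) ≤ C := by
  set S : ℝ := ∑' j : ℤ, 2 / ((j:ℝ)^2 + 1) with hS
  have hSpos : 0 < S := by
    have h0 : (0:ℝ) < 2 / (((0:ℤ):ℝ)^2 + 1) := by norm_num
    calc (0:ℝ) < 2 / (((0:ℤ):ℝ)^2 + 1) := h0
      _ ≤ S := Summable.le_tsum gsum 0 (fun j _ => by positivity)
  refine ⟨S, hSpos, fun a ha z hz haz => ?_⟩
  set R := ‖z‖ with hR
  have hR1 : (1:ℝ) ≤ R := hz
  have hRpos : (0:ℝ) < R ^ (m-1) := by positivity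
  set ι : ℕ → ℤ := fun l => (l:ℤ) + 1 - ⌊a⌋ with hι
  have hinj : Function.Injective ι := by
    intro x y h
    simpa [hι] using h
  set g : ℤ → ℝ := fun j => R^(m-1) * (2 / ((j:ℝ)^2 + 1)) with hg
  have hgsum : Summable g := gsum.mul_left _
  -- termwise bound
  have hterm : ∀ l : ℕ, ((l : ℝ) + 1) ^ (m - 1) / (1 + |((l : ℝ) + 1) - a|) ^ (m + 1)
      ≤ g (ι l) := by
    intro l
    set d : ℝ := |((l : ℝ) + 1) - a| with hd
    have hd0 : 0 ≤ d := abs_nonneg _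
    have h1d : (0:ℝ) < 1 + d := by linarith
    -- l+1 ≤ R*(1+d)
    have hle1 : ((l:ℝ) + 1) ≤ R * (1 + d) := by
      have h1 : ((l:ℝ) + 1) - a ≤ d := le_abs_self _
      nlinarith
    have hpow1 : ((l:ℝ) + 1) ^ (m-1) ≤ (R * (1+d)) ^ (m-1) :=
      pow_le_pow_left₀ (by positivity) hle1 _
    -- |ι l| ≤ 1 + d
    have hjr : ((ι l : ℤ) : ℝ) = ((l:ℝ) + 1) - (⌊a⌋ : ℝ) := by
      simp only [hι]
      push_cast
      ring
    have habs : |((ι l : ℤ) : ℝ)| ≤ 1 + d := by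
      rw [hjr]
      have h2 : |((l:ℝ) + 1) - (⌊a⌋:ℝ)| ≤ |((l:ℝ) + 1) - a| + |a - (⌊a⌋:ℝ)| := by
        have := abs_sub_le ((l:ℝ)+1) a ((⌊a⌋:ℝ))
        linarith
      have h3 : |a - (⌊a⌋:ℝ)| ≤ 1 := by
        rw [_root_.abs_of_nonneg (by linarith [Int.floor_le a])]
        linarith [Int.lt_floor_add_one a]
      linarith
    have hj2 : ((ι l : ℤ):ℝ)^2 + 1 ≤ 2 * (1 + d)^2 := by
      have := abs_nonneg ((ι l : ℤ):ℝ)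
      nlinarith [_root_.sq_abs ((ι l : ℤ):ℝ)]
    -- now combine
    have hmsplit : (1 + d) ^ (m + 1) = (1 + d) ^ (m - 1) * (1 + d)^2 := by
      rw [← pow_add]
      congr 1
      omega
    rw [hg]
    calc ((l : ℝ) + 1) ^ (m - 1) / (1 + d) ^ (m + 1)
        ≤ (R * (1+d)) ^ (m-1) / (1 + d) ^ (m + 1) := by
          gcongr
      _ = R^(m-1) / (1+d)^2 := by
          rw [mul_pow, hmsplit]
          field_simp
      _ ≤ R^(m-1) * (2 / (((ι l : ℤ):ℝ)^2 + 1)) := by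
          rw [div_eq_mul_inv, mul_le_mul_iff_of_pos_left hRpos]
          rw [← one_div, div_le_div_iff₀ (by positivity) (by positivity)]
          linarith
  have hfs : Summable (fun l : ℕ =>
      ((l : ℝ) + 1) ^ (m - 1) / (1 + |((l : ℝ) + 1) - a|) ^ (m + 1)) :=
    Summable.of_nonneg_of_le (fun l => by positivity) hterm (hgsum.comp_injective hinj)
  have hle : (∑' l : ℕ, ((l : ℝ) + 1) ^ (m - 1) / (1 + |((l : ℝ) + 1) - a|) ^ (m + 1))
      ≤ ∑' j : ℤ, g j :=
    hfs.tsum_le_tsum_of_inj ι hinj (fun c _ => by positivity) hterm hgsum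
  have hgt : (∑' j : ℤ, g j) = R ^ (m - 1) * S := by
    rw [hS, hg]
    exact tsum_mul_left
  rw [div_le_iff₀ hRpos]
  rw [hgt] at hle
  linarith
end

section
/- Let m ≥ 2, α > 0 large, and let τ ∈ [α + k − 1, α + k) with integer k ≥ 2, and let z = α + iβ with 0 < β ≤ 1/2. Then there is a constant C = C(m) such that |τ^m − z^m| ≥ (k−1)(α+k)^{m−1}/C for all α sufficiently large (depending on m). -/
open Complex Real

/-- For `m ≥ 2` there are constants `C = C(m) > 0` and `A = A(m)` such that for
all `α ≥ A`, integers `k ≥ 2`, `τ ∈ [α + k - 1, α + k)`, and `z = α + iβ` with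
`0 < β ≤ 1/2`, one has `|τ^m - z^m| ≥ (k-1)(α+k)^{m-1}/C`. -/
theorem stmt18 (m : ℕ) (hm : 2 ≤ m) :
    ∃ C : ℝ, 0 < C ∧ ∃ A : ℝ, ∀ α : ℝ, A ≤ α → ∀ k : ℕ, 2 ≤ k →
      ∀ τ : ℝ, α + k - 1 ≤ τ → τ < α + k →
      ∀ β : ℝ, 0 < β → β ≤ 1 / 2 →
        ((k : ℝ) - 1) * (α + k) ^ (m - 1) / C
          ≤ ‖(τ : ℂ) ^ m - ((α : ℂ) + Complex.I * β) ^ m‖ := by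
  obtain ⟨n, rfl⟩ : ∃ n, m = n + 1 := ⟨m - 1, by omega⟩
  refine ⟨2 ^ (n + 1), by positivity, 1, fun α hα k hk τ hτ1 hτ2 β hβ0 hβ => ?_⟩
  have hkR : (2 : ℝ) ≤ (k : ℝ) := by exact_mod_cast hk
  set z : ℂ := (α : ℂ) + Complex.I * β with hz
  set s : ℝ := ‖z‖ with hsdef
  have hs0 : 0 ≤ s := norm_nonneg z
  have hs_le : s ≤ α + 1 / 2 := by
    calc s ≤ |z.re| + |z.im| := Complex.norm_le_abs_re_add_abs_im z
    _ = |α| + |β| := by simp [hz]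
    _ ≤ α + 1 / 2 := by
        rw [_root_.abs_of_nonneg (show (0:ℝ) ≤ α by linarith), _root_.abs_of_nonneg hβ0.le]; linarith
  have hτs : s ≤ τ := by linarith
  have hτ0 : 0 ≤ τ := by linarith
  have hpow : s ^ n ≤ τ ^ n := pow_le_pow_left₀ hs0 hτs n
  have key : (τ - s) * τ ^ n ≤ τ ^ (n + 1) - s ^ (n + 1) := by
    have h1 : s * s ^ n ≤ s * τ ^ n := mul_le_mul_of_nonneg_left hpow hs0
    have h2 : s * τ ^ n ≤ τ * τ ^ n :=
      mul_le_mul_of_nonneg_right hτs (pow_nonneg hτ0 n)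
    rw [pow_succ, pow_succ]
    nlinarith
  have habs : τ ^ (n + 1) - s ^ (n + 1)
      ≤ ‖(τ : ℂ) ^ (n + 1) - z ^ (n + 1)‖ := by
    have := norm_sub_norm_le ((τ : ℂ) ^ (n + 1)) (z ^ (n + 1))
    have e1 : ‖(τ : ℂ) ^ (n + 1)‖ = τ ^ (n + 1) := by
      rw [norm_pow, Complex.norm_real, Real.norm_eq_abs, _root_.abs_of_nonneg hτ0]
    have e2 : ‖z ^ (n + 1)‖ = s ^ (n + 1) := by rw [norm_pow]
    linarith
  have hαk : (α + k) ^ n ≤ 2 ^ n * (α + k - 1) ^ n := by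
    calc (α + k) ^ n ≤ (2 * (α + k - 1)) ^ n := by
          apply pow_le_pow_left₀ (by linarith) (by linarith)
    _ = 2 ^ n * (α + k - 1) ^ n := mul_pow 2 _ n
  have hαkτ : (α + k) ^ n ≤ 2 ^ n * τ ^ n := by
    refine hαk.trans (mul_le_mul_of_nonneg_left ?_ (by positivity))
    exact pow_le_pow_left₀ (by linarith) hτ1 n
  have hks : (k : ℝ) - 1 ≤ 2 * (τ - s) := by linarith
  have main : ((k : ℝ) - 1) * (α + k) ^ n ≤ 2 ^ (n + 1) * ((τ - s) * τ ^ n) := by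
    have h3 : ((k : ℝ) - 1) * (α + k) ^ n ≤ ((k : ℝ) - 1) * (2 ^ n * τ ^ n) :=
      mul_le_mul_of_nonneg_left hαkτ (by linarith)
    have h4 : ((k : ℝ) - 1) * (2 ^ n * τ ^ n) ≤ (2 * (τ - s)) * (2 ^ n * τ ^ n) :=
      mul_le_mul_of_nonneg_right hks (by positivity)
    calc ((k : ℝ) - 1) * (α + k) ^ n ≤ (2 * (τ - s)) * (2 ^ n * τ ^ n) := h3.trans h4
    _ = 2 ^ (n + 1) * ((τ - s) * τ ^ n) := by ring
  have hfinal : ((k : ℝ) - 1) * (α + k) ^ (n + 1 - 1) / 2 ^ (n + 1)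
      ≤ (τ - s) * τ ^ n := by
    rw [Nat.add_sub_cancel, div_le_iff₀ (by positivity)]
    linarith [main]
  calc ((k : ℝ) - 1) * (α + k) ^ (n + 1 - 1) / 2 ^ (n + 1)
      ≤ (τ - s) * τ ^ n := hfinal
    _ ≤ τ ^ (n + 1) - s ^ (n + 1) := key
    _ ≤ _ := habs
end
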